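/- Let n > 2, k odd with k < 2^n, and let P_k(n) be the Proth numerical semigroup with s_0 = k·2^n + 1. If s ∈ P_k(n) and s is not congruent to 0 modulo s_0, then s + 1 ∈ P_k(n). -/

import Mathlib

theorem succ_mem (n k : ℕ) (hn : 2 < n) (hk : Odd k) (hkpos : 0 < k) (hklt : k < 2 ^ n)
    (s : ℕ) (hs : s ∈ AddSubmonoid.closure {m : ℕ | ∃ i : ℕ, m = k * 2 ^ (n + i) + 1})
    (hmod : ¬ (k * 2 ^ n + 1) ∣ s) :
    s + 1 ∈ AddSubmonoid.closure {m : ℕ | ∃ i : ℕ, m = k * 2 ^ (n + i) + 1} := by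
  set S := AddSubmonoid.closure {m : ℕ | ∃ i : ℕ, m = k * 2 ^ (n + i) + 1} with hS
  have key : ∀ x ∈ S, (k * 2 ^ n + 1) ∣ x ∨ x + 1 ∈ S := by
    intro x hx
    induction hx using AddSubmonoid.closure_induction with
    | mem m hm =>
      obtain ⟨i, rfl⟩ := hm
      cases i with
      | zero => left; simp
      | succ j =>
        right
        have h1 : k * 2 ^ (n + j) + 1 ∈ S := by
          apply AddSubmonoid.subset_closure
          exact ⟨j, rfl⟩
        have heq : k * 2 ^ (n + (j + 1)) + 1 + 1
            = (k * 2 ^ (n + j) + 1) + (k * 2 ^ (n + j) + 1) := by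
          ring
        rw [heq]
        exact AddSubmonoid.add_mem _ h1 h1
    | zero => left; simp
    | add a b ha hb iha ihb =>
      rcases iha with h | h
      · rcases ihb with h' | h'
        · left; exact dvd_add h h'
        · right
          have : a + b + 1 = a + (b + 1) := by ring
          rw [this]
          exact AddSubmonoid.add_mem _ ha h'
      · right
        have : a + b + 1 = (a + 1) + b := by ring
        rw [this]
        exact AddSubmonoid.add_mem _ h hb
  rcases key s hs with h | h
  · exact absurd h hmod
  · exact h
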